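/- (Covering inequality for averages.) Let $\Omega \subset \mathbb{R}^D$ be a convex body with inradius $r(\Omega) > C_D$ for a sufficiently large constant $C_D > 1$, and let $f : \mathbb{Z}^D \to \mathbb{R}_{\ge 0}$. Then $\mathbb{E}_{x \in \Omega \cap \mathbb{Z}^D} f(x) \ll_D \sup_{y \in \mathbb{R}^D} \mathbb{E}_{x \in (y + [-r(\Omega), r(\Omega)]^D) \cap \mathbb{Z}^D} f(x)$. -/

import Mathlib

open MeasureTheory Metric

private noncomputable def intCube {D : ℕ} (c : Fin D → ℤ) (r : ℤ) : Finset (Fin D → ℤ) :=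
  Fintype.piFinset fun i => Finset.Icc (c i - r) (c i + r)

private lemma mem_intCube {D : ℕ} {c x : Fin D → ℤ} {r : ℤ} :
    x ∈ intCube c r ↔ ∀ i, |x i - c i| ≤ r := by
  simp only [intCube, Fintype.mem_piFinset, Finset.mem_Icc, abs_le]
  constructor <;> intro h i <;> have := h i <;> omega

private lemma card_intCube {D : ℕ} (c : Fin D → ℤ) (r : ℤ) :
    (intCube c r).card = (2*r+1).toNat ^ D := by
  simp only [intCube, Fintype.card_piFinset, Int.card_Icc]
  have h : ∀ i : Fin D, (c i + r + 1 - (c i - r)) = 2*r+1 := fun i => by ring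
  simp [h]

private lemma euclid_dist_le {D : ℕ} (a b : EuclideanSpace ℝ (Fin D)) {t : ℝ}
    (h : ∀ i, |a i - b i| ≤ t) : dist a b ≤ Real.sqrt (D * t^2) := by
  rw [EuclideanSpace.dist_eq]
  apply Real.sqrt_le_sqrt
  calc ∑ i, dist (a i) (b i)^2 ≤ ∑ _i : Fin D, t^2 := by
        refine Finset.sum_le_sum fun i _ => ?_
        rw [Real.dist_eq]
        exact pow_le_pow_left₀ (abs_nonneg _) (h i) 2
    _ = D * t^2 := by simp [Finset.sum_const, Finset.card_univ]

private lemma euclid_coord_le {D : ℕ} (a b : EuclideanSpace ℝ (Fin D)) (i : Fin D) :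
    |a i - b i| ≤ dist a b := by
  rw [EuclideanSpace.dist_eq, ← Real.sqrt_sq_eq_abs]
  apply Real.sqrt_le_sqrt
  calc (a i - b i)^2 = dist (a i) (b i)^2 := by rw [Real.dist_eq, sq_abs]
    _ ≤ ∑ j, dist (a j) (b j)^2 :=
        Finset.single_le_sum (f := fun j => dist (a j) (b j)^2)
          (fun j _ => sq_nonneg _) (Finset.mem_univ i)

set_option maxHeartbeats 2000000 in
/-- Covering inequality: if `Ω ⊂ ℝ^D` is a convex body containing a ball of radius
`ρ > C_D`, and `f : ℤ^D → ℝ≥0`, then the average of `f` over `Ω ∩ ℤ^D` is bounded by a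
constant (depending only on `D`) times the supremum over `y ∈ ℝ^D` of the averages of
`f` over the lattice points of the cubes `y + [-ρ, ρ]^D`; the supremum is expressed by
quantifying over any common upper bound `K` for all these cube averages. -/
theorem stmt_12 (D : ℕ) :
    ∃ C : ℝ, 1 < C ∧
      ∀ (f : (Fin D → ℤ) → ℝ) (Ω : Set (EuclideanSpace ℝ (Fin D))) (ρ : ℝ) (K : ℝ),
        (∀ x, 0 ≤ f x) →
        IsOpen Ω → Bornology.IsBounded Ω → Convex ℝ Ω →
        (∃ x, ball x ρ ⊆ Ω) → C < ρ →
        (∀ y : Fin D → ℝ,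
          (∑ᶠ x ∈ {x : Fin D → ℤ | ∀ i, |(x i : ℝ) - y i| ≤ ρ}, f x)
              / ({x : Fin D → ℤ | ∀ i, |(x i : ℝ) - y i| ≤ ρ}).ncard ≤ K) →
        (∑ᶠ x ∈ {x : Fin D → ℤ | WithLp.toLp 2 (fun i => (x i : ℝ)) ∈ Ω}, f x)
            / ({x : Fin D → ℤ | WithLp.toLp 2 (fun i => (x i : ℝ)) ∈ Ω}).ncard
          ≤ C * K := by
  classical
  refine ⟨((54:ℝ)*(D+1))^D + 6*(D+1) + 2, ?_, ?_⟩
  · have h1 : (0:ℝ) ≤ ((54:ℝ)*(D+1))^D := by positivity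
    have h2 : (0:ℝ) ≤ 6*((D:ℝ)+1) := by positivity
    linarith
  intro f Ω ρ K hf hΩo hΩb hΩc hball hρC hK
  obtain ⟨x0, hx0⟩ := hball
  have hCpow : (0:ℝ) ≤ ((54:ℝ)*(D+1))^D := by positivity
  have hρ6 : 6*((D:ℝ)+1) < ρ := by linarith
  have hρ1 : (1:ℝ) < ρ := by nlinarith [Nat.cast_nonneg (α := ℝ) D]
  have hρ0 : (0:ℝ) < ρ := by linarith
  set m : ℤ := ⌊ρ⌋ with hm
  have hm1 : 1 ≤ m := by
    rw [hm]; exact Int.le_floor.2 (by exact_mod_cast hρ1.le)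
  have hmρ : (m:ℝ) ≤ ρ := Int.floor_le ρ
  have hρm : ρ < (m:ℝ) + 1 := Int.lt_floor_add_one ρ
  set L : ℤ := 2*m+1 with hL
  have hL0 : 0 < L := by omega
  have hρL : ρ ≤ (L:ℝ) := by push_cast [hL]; linarith
  have hLρ : (L:ℝ) ≤ 2*ρ+1 := by push_cast [hL]; linarith
  set hw : ℝ := ρ/(2*((D:ℝ)+1)) with hhw
  have hD1 : (0:ℝ) < (D:ℝ)+1 := by positivity
  have hhw3 : 3 ≤ hw := by
    rw [hhw, le_div_iff₀ (by positivity)]; linarith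
  have h2hw : 2*hw = ρ/((D:ℝ)+1) := by rw [hhw]; field_simp
  have h2hwρ : 2*hw ≤ ρ := by
    rw [h2hw, div_le_iff₀ hD1]; nlinarith [Nat.cast_nonneg (α := ℝ) D]
  set k : ℤ := ⌊hw⌋ - 1 with hk
  have hk1 : 1 ≤ k := by
    have h3 : (3:ℤ) ≤ ⌊hw⌋ := Int.le_floor.2 (by exact_mod_cast hhw3)
    omega
  have hkh : (k:ℝ) + 1 ≤ hw := by
    have := Int.floor_le hw; push_cast [hk]; linarith
  have h2k1 : hw ≤ 2*(k:ℝ)+1 := by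
    have h1 := Int.lt_floor_add_one hw; push_cast [hk]; linarith
  -- the lattice point set S
  set S : Set (Fin D → ℤ) := {x : Fin D → ℤ | WithLp.toLp 2 (fun i => (x i : ℝ)) ∈ Ω} with hS
  obtain ⟨R, hR⟩ := hΩb.subset_closedBall 0
  have hSfin : S.Finite := by
    apply Set.Finite.subset (Finset.finite_toSet (intCube (0 : Fin D → ℤ) ⌈R⌉))
    intro x hx
    have hmem' : (WithLp.toLp 2 (fun i => (x i : ℝ)) : EuclideanSpace ℝ (Fin D)) ∈ Ω := hx
    simp only [Finset.mem_coe, mem_intCube]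
    intro i
    have hco : |(x i : ℝ)| ≤ R := by
      have h1 := euclid_coord_le (WithLp.toLp 2 (fun i => (x i : ℝ)) : EuclideanSpace ℝ (Fin D)) 0 i
      have h2 : ((0 : EuclideanSpace ℝ (Fin D)) i) = 0 := rfl
      rw [h2, sub_zero] at h1
      exact h1.trans (Metric.mem_closedBall.1 (hR hmem'))
    have h2 : ((|x i| : ℤ) : ℝ) ≤ (⌈R⌉ : ℝ) := by
      push_cast
      exact hco.trans (Int.le_ceil R)
    have h3 : |x i| ≤ ⌈R⌉ := by exact_mod_cast h2
    simpa using h3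
  set SF : Finset (Fin D → ℤ) := hSfin.toFinset with hSF
  have hmemSF : ∀ x : Fin D → ℤ,
      x ∈ SF ↔ (WithLp.toLp 2 (fun i => (x i : ℝ)) : EuclideanSpace ℝ (Fin D)) ∈ Ω := by
    intro x; rw [hSF, Set.Finite.mem_toFinset]; rfl
  -- tiling of the lattice by cubes of side L
  set zfun : (Fin D → ℤ) → (Fin D → ℤ) := fun x i => (x i + m) / L with hzfun
  have htile : ∀ (x : Fin D → ℤ) (i : Fin D), |x i - L * zfun x i| ≤ m := by
    intro x i
    have h1 := Int.mul_ediv_add_emod (x i + m) L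
    have h2 := Int.emod_nonneg (x i + m) (ne_of_gt hL0)
    have h3 := Int.emod_lt_of_pos (x i + m) hL0
    rw [abs_le]
    simp only [hzfun]
    omega
  have huniq : ∀ (x z z' : Fin D → ℤ), (∀ i, |x i - L * z i| ≤ m) →
      (∀ i, |x i - L * z' i| ≤ m) → z = z' := by
    intro x z z' h1 h2
    funext i
    have a1 := abs_le.1 (h1 i)
    have a2 := abs_le.1 (h2 i)
    by_contra hne
    have hne' : z i ≠ z' i := hne
    rcases lt_or_gt_of_ne hne' with hlt | hlt
    · have : L * z i + L * 1 ≤ L * z' i := by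
        rw [← mul_add]
        exact mul_le_mul_of_nonneg_left (by omega) hL0.le
      omega
    · have : L * z' i + L * 1 ≤ L * z i := by
        rw [← mul_add]
        exact mul_le_mul_of_nonneg_left (by omega) hL0.le
      omega
  set QF : (Fin D → ℤ) → Finset (Fin D → ℤ) :=
    fun z => intCube (fun i => L * z i) m with hQF
  set ZF : Finset (Fin D → ℤ) := SF.image zfun with hZF
  have hcover : SF ⊆ ZF.biUnion QF := by
    intro x hx
    refine Finset.mem_biUnion.2 ⟨zfun x, Finset.mem_image_of_mem _ hx, ?_⟩
    simp only [hQF]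
    exact mem_intCube.2 (htile x)
  have hdisj : (↑ZF : Set (Fin D → ℤ)).PairwiseDisjoint QF := by
    intro z hz z' hz' hne
    refine Finset.disjoint_left.2 fun x hx hx' => hne ?_
    simp only [hQF] at hx hx'
    exact huniq x z z' (mem_intCube.1 hx) (mem_intCube.1 hx')
  -- sets of lattice points of real cubes with integer centers
  have hcubeset : ∀ c : Fin D → ℤ,
      {x : Fin D → ℤ | ∀ i, |(x i : ℝ) - ((c i : ℝ))| ≤ ρ} = ↑(intCube c m) := by
    intro c
    ext x
    simp only [Set.mem_setOf_eq, Finset.mem_coe, mem_intCube]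
    constructor <;> intro hh i <;> have h := hh i
    · have : |x i - c i| ≤ ⌊ρ⌋ := by
        rw [Int.le_floor]; push_cast; exact h
      rwa [← hm] at this
    · have h2 : ((|x i - c i| : ℤ) : ℝ) ≤ ρ := le_trans (by exact_mod_cast h) hmρ
      push_cast at h2
      exact h2
  have hLnat0 : 0 < (2*m+1).toNat ^ D := by
    apply pow_pos; omega
  have hcube : ∀ c : Fin D → ℤ,
      ∑ x ∈ intCube c m, f x ≤ K * (((2*m+1).toNat ^ D : ℕ) : ℝ) := by
    intro c
    have h := hK (fun i => (c i : ℝ))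
    rw [hcubeset c, finsum_mem_coe_finset, Set.ncard_coe_finset, card_intCube] at h
    rw [div_le_iff₀ (by exact_mod_cast hLnat0)] at h
    linarith [h]
  have hK0 : 0 ≤ K := by
    have h := hK (fun i => ((0 : Fin D → ℤ) i : ℝ))
    refine le_trans ?_ h
    rw [hcubeset 0, finsum_mem_coe_finset]
    exact div_nonneg (Finset.sum_nonneg fun x _ => hf x) (Nat.cast_nonneg _)
  -- sum bound
  have hA1 : ∑ x ∈ SF, f x ≤ (ZF.card : ℝ) * (K * (((2*m+1).toNat ^ D : ℕ) : ℝ)) := by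
    calc ∑ x ∈ SF, f x ≤ ∑ x ∈ ZF.biUnion QF, f x :=
          Finset.sum_le_sum_of_subset_of_nonneg hcover (fun x _ _ => hf x)
      _ = ∑ z ∈ ZF, ∑ x ∈ QF z, f x := Finset.sum_biUnion hdisj
      _ ≤ ∑ _z ∈ ZF, K * (((2*m+1).toNat ^ D : ℕ) : ℝ) :=
          Finset.sum_le_sum fun z _ => hcube _
      _ = (ZF.card : ℝ) * (K * (((2*m+1).toNat ^ D : ℕ) : ℝ)) := by
          rw [Finset.sum_const, nsmul_eq_mul]
  -- representatives of the occupied tiles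
  set P : (Fin D → ℤ) → (Fin D → ℤ) :=
    fun z => if hz : ∃ p, p ∈ SF ∧ zfun p = z then hz.choose else 0 with hP
  have hPspec : ∀ z ∈ ZF, P z ∈ SF ∧ zfun (P z) = z := by
    intro z hz
    obtain ⟨p, hp1, hp2⟩ := Finset.mem_image.1 hz
    have hex : ∃ p, p ∈ SF ∧ zfun p = z := ⟨p, hp1, hp2⟩
    simp only [hP, dif_pos hex]
    exact hex.choose_spec
  set qc : (Fin D → ℤ) → (Fin D → ℤ) :=
    fun z i => ⌊(((P z) i : ℝ) + x0 i)/2⌋ with hqc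
  have hqcspec : ∀ z i, |(((P z) i : ℝ) + x0 i) - 2*((qc z i : ℝ))| ≤ 2 := by
    intro z i
    have h1 : ((qc z i : ℝ)) ≤ (((P z) i : ℝ) + x0 i)/2 := by
      simp only [hqc]; exact Int.floor_le _
    have h2 : (((P z) i : ℝ) + x0 i)/2 < (qc z i : ℝ) + 1 := by
      simp only [hqc]; exact Int.lt_floor_add_one _
    rw [abs_le]
    constructor <;> linarith
  set TF : (Fin D → ℤ) → Finset (Fin D → ℤ) := fun z => intCube (qc z) k with hTF
  -- the small cubes lie inside Ω
  have hTsub : ∀ z ∈ ZF, TF z ⊆ SF := by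
    intro z hz w hwT
    obtain ⟨hpSF, hpz⟩ := hPspec z hz
    simp only [hTF] at hwT
    have hwq := mem_intCube.1 hwT
    set b : EuclideanSpace ℝ (Fin D) := WithLp.toLp 2 (fun i => 2*(w i : ℝ) - ((P z) i : ℝ)) with hb
    have hbco : ∀ i, |b i - x0 i| ≤ ρ/((D:ℝ)+1) := by
      intro i
      have hq := abs_le.1 (hqcspec z i)
      have hwq1 : |(w i : ℝ) - (qc z i : ℝ)| ≤ (k : ℝ) := by
        have := hwq i
        have h2 : ((|w i - qc z i| : ℤ) : ℝ) ≤ (k : ℝ) := by exact_mod_cast this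
        push_cast at h2
        exact h2
      have hwq2 := abs_le.1 hwq1
      have hbi : b i = 2*(w i : ℝ) - ((P z) i : ℝ) := rfl
      rw [← h2hw, abs_le, hbi]
      constructor <;> linarith
    have hbmem : b ∈ Ω := by
      apply hx0
      rw [mem_ball]
      refine lt_of_le_of_lt (euclid_dist_le b x0 hbco) ?_
      rw [Real.sqrt_lt' hρ0]
      have h9 : (D:ℝ) * (ρ/((D:ℝ)+1))^2 = ρ^2 * ((D:ℝ)/((D:ℝ)+1)^2) := by
        field_simp
      rw [h9]
      have h10 : (D:ℝ)/((D:ℝ)+1)^2 < 1 := by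
        rw [div_lt_one (by positivity)]
        nlinarith [Nat.cast_nonneg (α := ℝ) D]
      calc ρ^2 * ((D:ℝ)/((D:ℝ)+1)^2) < ρ^2 * 1 :=
            mul_lt_mul_of_pos_left h10 (by positivity)
        _ = ρ^2 := mul_one _
    set pv : EuclideanSpace ℝ (Fin D) := WithLp.toLp 2 (fun i => ((P z) i : ℝ)) with hpv
    have hpmem : pv ∈ Ω := (hmemSF _).1 hpSF
    have hcomb := hΩc hpmem hbmem (by norm_num : (0:ℝ) ≤ 1/2)
      (by norm_num : (0:ℝ) ≤ 1/2) (by norm_num)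
    have heq : (WithLp.toLp 2 (fun i => (w i : ℝ)) : EuclideanSpace ℝ (Fin D))
        = (1/2:ℝ) • pv + (1/2:ℝ) • b := by
      ext i
      simp only [PiLp.add_apply, PiLp.smul_apply, smul_eq_mul, hb, hpv, PiLp.toLp_apply]
      ring
    exact (hmemSF w).2 (by rw [heq]; exact hcomb)
  -- multiplicity bound
  have hmult : ∀ w, (ZF.filter fun z => w ∈ TF z).card ≤ 9^D := by
    intro w
    have hsub : (ZF.filter fun z => w ∈ TF z) ⊆
        intCube (fun i => ⌈(2*(w i:ℝ) - x0 i)/(L:ℝ)⌉) 4 := by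
      intro z hz
      obtain ⟨hzZF, hwT⟩ := Finset.mem_filter.1 hz
      obtain ⟨hpSF, hpz⟩ := hPspec z hzZF
      rw [mem_intCube]
      intro i
      have hLR : (0:ℝ) < (L:ℝ) := by exact_mod_cast hL0
      set c : ℝ := (2*(w i:ℝ) - x0 i)/(L:ℝ) with hc
      -- tile estimate for P z
      have ht0 := abs_le.1 (htile (P z) i)
      rw [hpz] at ht0
      have ht1 : |((P z) i : ℝ) - (L:ℝ)*(z i : ℝ)| ≤ (m:ℝ) := by
        have : ((|(P z) i - L * z i| : ℤ) : ℝ) ≤ (m:ℝ) := by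
          exact_mod_cast abs_le.2 ht0
        push_cast at this
        exact this
      have ht2 := abs_le.1 ht1
      have hq := abs_le.1 (hqcspec z i)
      simp only [hTF] at hwT
      have hwq1 : |(w i : ℝ) - (qc z i : ℝ)| ≤ (k : ℝ) := by
        have := mem_intCube.1 hwT i
        have h2 : ((|w i - qc z i| : ℤ) : ℝ) ≤ (k : ℝ) := by exact_mod_cast this
        push_cast at h2
        exact h2
      have hwq2 := abs_le.1 hwq1
      have hnum : |(L:ℝ)*(z i : ℝ) - (2*(w i:ℝ) - x0 i)| ≤ 2*ρ := by
        rw [abs_le]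
        constructor <;> linarith
      have hzc : |(z i : ℝ) - c| ≤ 2 := by
        have heq2 : (z i : ℝ) - c = ((L:ℝ)*(z i : ℝ) - (2*(w i:ℝ) - x0 i))/(L:ℝ) := by
          rw [hc]; field_simp
        rw [heq2, abs_div, abs_of_pos hLR, div_le_iff₀ hLR]
        linarith
      have hceil1 : c ≤ (⌈c⌉ : ℝ) := Int.le_ceil c
      have hceil2 : (⌈c⌉ : ℝ) < c + 1 := Int.ceil_lt_add_one c
      have hzc2 := abs_le.1 hzc
      have hfin : ((|z i - ⌈c⌉| : ℤ) : ℝ) ≤ ((4:ℤ):ℝ) := by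
        push_cast
        rw [abs_le]
        constructor <;> linarith
      exact_mod_cast hfin
    calc (ZF.filter fun z => w ∈ TF z).card
        ≤ (intCube (fun i => ⌈(2*(w i:ℝ) - x0 i)/(L:ℝ)⌉) 4).card :=
          Finset.card_le_card hsub
      _ = 9^D := by
          rw [card_intCube]
          simp
  -- double counting
  have hTcount : ZF.card * (2*k+1).toNat^D ≤ SF.card * 9^D := by
    have e1 : ∀ z ∈ ZF, (2*k+1).toNat^D = (SF.filter (fun w => w ∈ TF z)).card := by
      intro z hz
      have : SF.filter (fun w => w ∈ TF z) = TF z := by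
        ext w
        simp only [Finset.mem_filter]
        exact ⟨fun h => h.2, fun h => ⟨hTsub z hz h, h⟩⟩
      rw [this, hTF]
      exact (card_intCube _ _).symm
    calc ZF.card * (2*k+1).toNat^D = ∑ z ∈ ZF, (2*k+1).toNat^D := by
          rw [Finset.sum_const, smul_eq_mul]
      _ = ∑ z ∈ ZF, (SF.filter (fun w => w ∈ TF z)).card :=
          Finset.sum_congr rfl e1
      _ = ∑ w ∈ SF, (ZF.filter (fun z => w ∈ TF z)).card := by
          simp only [Finset.card_filter]
          rw [Finset.sum_comm]
      _ ≤ ∑ _w ∈ SF, 9^D := Finset.sum_le_sum fun w _ => hmult w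
      _ = SF.card * 9^D := by rw [Finset.sum_const, smul_eq_mul]
  -- comparing side lengths
  have hLk : (2*m+1).toNat ≤ 6*(D+1) * (2*k+1).toNat := by
    have hc1 : (((2*m+1).toNat : ℤ) : ℝ) = ((2*m+1 : ℤ) : ℝ) := by
      rw [Int.toNat_of_nonneg (by omega)]
    have hc2 : (((2*k+1).toNat : ℤ) : ℝ) = ((2*k+1 : ℤ) : ℝ) := by
      rw [Int.toNat_of_nonneg (by omega)]
    have hreal : (((2*m+1).toNat : ℤ) : ℝ) ≤ (6*((D:ℝ)+1)) * (((2*k+1).toNat : ℤ) : ℝ) := by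
      rw [hc1, hc2]
      push_cast
      have h3ρ : 2*ρ+1 ≤ 3*ρ := by linarith
      have h6 : 3*ρ = 6*((D:ℝ)+1) * hw := by
        rw [hhw]; field_simp; ring
      have h7 : 6*((D:ℝ)+1) * hw ≤ 6*((D:ℝ)+1) * (2*(k:ℝ)+1) := by
        apply mul_le_mul_of_nonneg_left h2k1 (by positivity)
      calc (2*(m:ℝ)+1) ≤ 2*ρ+1 := by linarith
        _ ≤ 3*ρ := h3ρ
        _ = 6*((D:ℝ)+1) * hw := h6
        _ ≤ 6*((D:ℝ)+1) * (2*(k:ℝ)+1) := h7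
    have : ((((2*m+1).toNat : ℕ)) : ℝ) ≤ ((6*(D+1) * (2*k+1).toNat : ℕ) : ℝ) := by
      push_cast
      push_cast at hreal
      linarith
    exact_mod_cast this
  -- the combined counting bound, in ℕ
  have hcountN : ZF.card * (2*m+1).toNat^D ≤ SF.card * (54*(D+1))^D := by
    calc ZF.card * (2*m+1).toNat^D
        ≤ ZF.card * (6*(D+1) * (2*k+1).toNat)^D := by
          exact Nat.mul_le_mul_left _ (Nat.pow_le_pow_left hLk D)
      _ = (6*(D+1))^D * (ZF.card * (2*k+1).toNat^D) := by
          rw [mul_pow]; ring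
      _ ≤ (6*(D+1))^D * (SF.card * 9^D) := Nat.mul_le_mul_left _ hTcount
      _ = SF.card * ((6*(D+1))^D * 9^D) := by ring
      _ = SF.card * (54*(D+1))^D := by
          rw [← mul_pow]
          congr 1
          congr 1
          ring
  -- nonemptiness of S
  have hSFne : 0 < SF.card := by
    have hmem : (WithLp.toLp 2 (fun i => ((⌊x0 i⌋ : ℤ) : ℝ)) : EuclideanSpace ℝ (Fin D)) ∈ Ω := by
      apply hx0
      rw [mem_ball]
      have hco : ∀ i, |(WithLp.toLp 2 (fun i => ((⌊x0 i⌋ : ℤ) : ℝ)) : EuclideanSpace ℝ (Fin D)) i - x0 i|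
          ≤ (1:ℝ) := by
        intro i
        have h1 := Int.floor_le (x0 i)
        have h2 := Int.lt_floor_add_one (x0 i)
        rw [abs_le]
        constructor <;> simp <;> linarith
      refine lt_of_le_of_lt (euclid_dist_le _ x0 hco) ?_
      rw [Real.sqrt_lt' hρ0]
      have hDρ : (D:ℝ) < ρ := by linarith [Nat.cast_nonneg (α := ℝ) D]
      have hρρ : ρ * 1 ≤ ρ * ρ := mul_le_mul_of_nonneg_left hρ1.le hρ0.le
      nlinarith [hDρ, hρρ]
    exact Finset.card_pos.2 ⟨_, (hmemSF _).2 hmem⟩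
  -- wrap up
  have hfin : ∑ᶠ x ∈ S, f x = ∑ x ∈ SF, f x :=
    finsum_mem_eq_finite_toFinset_sum f hSfin
  have hncard : S.ncard = SF.card := by
    rw [hSF]
    exact Set.ncard_eq_toFinset_card S hSfin
  rw [hfin, hncard, div_le_iff₀ (by exact_mod_cast hSFne)]
  have hcountR : (ZF.card : ℝ) * (((2*m+1).toNat^D : ℕ) : ℝ)
      ≤ (SF.card : ℝ) * ((54:ℝ)*((D:ℝ)+1))^D := by
    exact_mod_cast hcountN
  have hSFcast : (0:ℝ) ≤ (SF.card : ℝ) := Nat.cast_nonneg _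
  calc ∑ x ∈ SF, f x
      ≤ (ZF.card : ℝ) * (K * (((2*m+1).toNat ^ D : ℕ) : ℝ)) := hA1
    _ = K * ((ZF.card : ℝ) * (((2*m+1).toNat^D : ℕ) : ℝ)) := by ring
    _ ≤ K * ((SF.card : ℝ) * ((54:ℝ)*((D:ℝ)+1))^D) :=
        mul_le_mul_of_nonneg_left hcountR hK0
    _ ≤ (((54:ℝ)*((D:ℝ)+1))^D + 6*((D:ℝ)+1) + 2) * K * (SF.card : ℝ) := by
        nlinarith [mul_nonneg hK0 hSFcast, hD1]
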